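/- For k = 3, the orbital Schreier graph Γ = Γ_{000…} of the Hanoi Towers group H(3) has polynomial growth of degree log₂3: there exist constants c₂ ≥ c₁ > 0 such that c₁·n^{log 3 / log 2} ≤ γ(n) ≤ c₂·n^{log 3 / log 2} for all n ≥ 1. -/

import Mathlib

/-- The generator `a_{(ij)}` of the Hanoi Towers group, acting on finite words:
`a_{(ij)}(iw) = jw`, `a_{(ij)}(jw) = iw`, `a_{(ij)}(xw) = x · a_{(ij)}(w)` for `x ∉ {i,j}`,
and `a_{(ij)}(ε) = ε`. -/
def hMove {k : ℕ} (i j : Fin k) : List (Fin k) → List (Fin k)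
  | [] => []
  | x :: w => if x = i then j :: w else if x = j then i :: w else x :: hMove i j w

theorem hMove_involutive {k : ℕ} (i j : Fin k) : ∀ l, hMove i j (hMove i j l) = l := by
  intro l
  induction l with
  | nil => rfl
  | cons x w ih =>
    by_cases hxi : x = i
    · by_cases hij : j = i <;> simp [hMove, hxi, hij]
    · by_cases hxj : x = j
      · by_cases hij : j = i <;> simp [hMove, hxi, hxj, hij]
      · simp [hMove, hxi, hxj, ih]

/-- The generator `a_{(ij)}` as a permutation of the set of finite words. -/
def hGen {k : ℕ} (i j : Fin k) : Equiv.Perm (List (Fin k)) :=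
  ⟨hMove i j, hMove i j, hMove_involutive i j, hMove_involutive i j⟩

/-- The Hanoi Towers group `H(k)`, the subgroup of the permutation group of the set of
finite words over `{0, …, k-1}` generated by the `a_{(ij)}` for `i < j`. -/
def HanoiGroup (k : ℕ) : Subgroup (Equiv.Perm (List (Fin k))) :=
  Subgroup.closure {g | ∃ i j : Fin k, i < j ∧ g = hGen i j}

theorem hMove_length {k : ℕ} (i j : Fin k) (l : List (Fin k)) :
    (hMove i j l).length = l.length := by
  induction l with
  | nil => rfl
  | cons x w ih =>
    by_cases hxi : x = i
    · by_cases hij : j = i <;> simp [hMove, hxi, hij]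
    · by_cases hxj : x = j
      · by_cases hij : j = i <;> simp [hMove, hxi, hxj, hij]
      · simp [hMove, hxi, hxj, ih]

open Classical in
/-- The action of the generator `a_{(ij)}` on infinite words: it swaps `i` and `j` at the
first position whose letter lies in `{i,j}` and leaves all other letters fixed (if no
letter lies in `{i,j}`, the word is fixed). -/
noncomputable def hMoveInf {k : ℕ} (i j : Fin k) (s : ℕ → Fin k) : ℕ → Fin k :=
  fun m =>
    if (s m = i ∨ s m = j) ∧ ∀ l < m, s l ≠ i ∧ s l ≠ j then Equiv.swap i j (s m) else s m

/-- The orbital Schreier graph structure on infinite words: `s` and `t` are adjacent iff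
`s ≠ t` and some generator `a_{(ij)}` (with `i < j`) maps one to the other. -/
noncomputable def infGraph (k : ℕ) : SimpleGraph (ℕ → Fin k) where
  Adj s t := s ≠ t ∧ ∃ i j : Fin k, i < j ∧ (hMoveInf i j s = t ∨ hMoveInf i j t = s)
  symm := by
    constructor
    rintro s t ⟨hst, i, j, hij, h⟩
    exact ⟨hst.symm, i, j, hij, h.symm⟩
  loopless := ⟨fun s h => h.1 rfl⟩

/-- `s` lies in the orbit of `ξ` under the group generated by the actions of the
generators `a_{(ij)}`, `i < j`, on infinite words (each generator is an involution, so the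
orbit is the set of images of `ξ` under finite products of generators). -/
noncomputable def inOrbit {k : ℕ} (ξ s : ℕ → Fin k) : Prop :=
  ∃ l : List (Fin k × Fin k), (∀ p ∈ l, p.1 < p.2) ∧
    l.foldl (fun t p => hMoveInf p.1 p.2 t) ξ = s

/-- `γ(n)`: the number of vertices of the orbital Schreier graph `Γ_ξ` (whose vertex set
is the orbit of `ξ`) at graph distance at most `n` from `ξ`. -/
noncomputable def orbitalGrowth {k : ℕ} (ξ : ℕ → Fin k) (n : ℕ) : ℕ :=
  {s | inOrbit ξ s ∧ (infGraph k).dist ξ s ≤ n}.ncard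
namespace HanoiAux

/-- The condition for `hMoveInf i j` to act at position `m`. -/
def Cnd {k : ℕ} (i j : Fin k) (s : ℕ → Fin k) (m : ℕ) : Prop :=
  (s m = i ∨ s m = j) ∧ ∀ l < m, s l ≠ i ∧ s l ≠ j

lemma hMoveInf_pos {k : ℕ} {i j : Fin k} {s : ℕ → Fin k} {m : ℕ} (h : Cnd i j s m) :
    hMoveInf i j s m = Equiv.swap i j (s m) := by
  unfold hMoveInf
  rw [if_pos]
  exact h

lemma hMoveInf_neg {k : ℕ} {i j : Fin k} {s : ℕ → Fin k} {m : ℕ} (h : ¬ Cnd i j s m) :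
    hMoveInf i j s m = s m := by
  unfold hMoveInf
  rw [if_neg]
  exact h

lemma cnd_symm {k : ℕ} {i j : Fin k} {s : ℕ → Fin k} {m : ℕ} :
    Cnd j i s m ↔ Cnd i j s m := by
  constructor <;> rintro ⟨ha, hb⟩ <;>
    exact ⟨ha.symm, fun l hl => ⟨(hb l hl).2, (hb l hl).1⟩⟩

lemma cnd_of_change {k : ℕ} {i j : Fin k} {s : ℕ → Fin k} {m : ℕ}
    (h : hMoveInf i j s m ≠ s m) : Cnd i j s m := by
  by_contra hc
  exact h (hMoveInf_neg hc)

lemma ne_of_change {k : ℕ} {i j : Fin k} {s : ℕ → Fin k} {m : ℕ}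
    (h : hMoveInf i j s m ≠ s m) : i ≠ j := by
  intro hij
  subst hij
  by_cases hc : Cnd i i s m
  · rw [hMoveInf_pos hc] at h
    simp at h
  · exact h (hMoveInf_neg hc)

lemma hMoveInf_eq_update {k : ℕ} (i j : Fin k) (s : ℕ → Fin k) (m₀ : ℕ)
    (h1 : s m₀ = i ∨ s m₀ = j) (h2 : ∀ l < m₀, s l ≠ i ∧ s l ≠ j) :
    hMoveInf i j s = Function.update s m₀ (Equiv.swap i j (s m₀)) := by
  funext m
  rcases lt_trichotomy m m₀ with h | h | h
  · rw [Function.update_of_ne h.ne]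
    refine hMoveInf_neg ?_
    intro hc
    rcases hc.1 with h' | h'
    · exact (h2 m h).1 h'
    · exact (h2 m h).2 h'
  · subst h
    rw [hMoveInf_pos ⟨h1, h2⟩, Function.update_self]
  · rw [Function.update_of_ne h.ne']
    refine hMoveInf_neg ?_
    intro hc
    rcases h1 with h' | h'
    · exact (hc.2 m₀ h).1 h'
    · exact (hc.2 m₀ h).2 h'

lemma hMoveInf_eq_self {k : ℕ} {i j : Fin k} {s : ℕ → Fin k}
    (h : ∀ m, s m ≠ i ∧ s m ≠ j) : hMoveInf i j s = s := by
  funext m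
  refine hMoveInf_neg ?_
  intro hc
  rcases hc.1 with h' | h'
  · exact (h m).1 h'
  · exact (h m).2 h'

lemma hMoveInf_invol {k : ℕ} (i j : Fin k) (s : ℕ → Fin k) :
    hMoveInf i j (hMoveInf i j s) = s := by
  by_cases hex : ∃ m, s m = i ∨ s m = j
  · set m₀ := Nat.find hex with hm₀
    have h1 : s m₀ = i ∨ s m₀ = j := Nat.find_spec hex
    have h2 : ∀ l < m₀, s l ≠ i ∧ s l ≠ j := by
      intro l hl
      have := Nat.find_min hex hl
      push_neg at this
      exact this
    have e1 := hMoveInf_eq_update i j s m₀ h1 h2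
    set s' := hMoveInf i j s with hs'
    have hs'm₀ : s' m₀ = Equiv.swap i j (s m₀) := by rw [e1, Function.update_self]
    have hs'lt : ∀ l < m₀, s' l = s l := by
      intro l hl
      rw [e1, Function.update_of_ne hl.ne]
    have h1' : s' m₀ = i ∨ s' m₀ = j := by
      rw [hs'm₀]
      rcases h1 with h | h <;> rw [h] <;> simp
    have h2' : ∀ l < m₀, s' l ≠ i ∧ s' l ≠ j := by
      intro l hl
      rw [hs'lt l hl]
      exact h2 l hl
    rw [hMoveInf_eq_update i j s' m₀ h1' h2', hs'm₀, Equiv.swap_apply_self, e1,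
      Function.update_idem, Function.update_eq_self]
  · push_neg at hex
    have h : hMoveInf i j s = s := hMoveInf_eq_self hex
    rw [h, h]

lemma hMoveInf_comm {k : ℕ} (i j : Fin k) (s : ℕ → Fin k) :
    hMoveInf j i s = hMoveInf i j s := by
  funext m
  by_cases h : Cnd i j s m
  · rw [hMoveInf_pos (cnd_symm.mpr h), hMoveInf_pos h, Equiv.swap_comm]
  · rw [hMoveInf_neg (fun hc => h (cnd_symm.mp hc)), hMoveInf_neg h]

end HanoiAux
namespace HanoiAux

/-- Apply a list of generator moves to an infinite word. -/
noncomputable def moveList {k : ℕ} (L : List (Fin k × Fin k)) (u : ℕ → Fin k) : ℕ → Fin k :=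
  L.foldl (fun t p => hMoveInf p.1 p.2 t) u

@[simp] lemma moveList_nil {k : ℕ} (u : ℕ → Fin k) : moveList [] u = u := rfl

lemma moveList_cons {k : ℕ} (q : Fin k × Fin k) (L : List (Fin k × Fin k)) (u : ℕ → Fin k) :
    moveList (q :: L) u = moveList L (hMoveInf q.1 q.2 u) := rfl

lemma moveList_append {k : ℕ} (L₁ L₂ : List (Fin k × Fin k)) (u : ℕ → Fin k) :
    moveList (L₁ ++ L₂) u = moveList L₂ (moveList L₁ u) :=
  List.foldl_append

lemma moveList_singleton {k : ℕ} (q : Fin k × Fin k) (u : ℕ → Fin k) :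
    moveList [q] u = hMoveInf q.1 q.2 u := rfl

lemma moveList_take_succ {k : ℕ} (L : List (Fin k × Fin k)) (u : ℕ → Fin k) (t : ℕ)
    (ht : t < L.length) :
    moveList (L.take (t + 1)) u = hMoveInf (L[t].1) (L[t].2) (moveList (L.take t) u) := by
  rw [← List.take_concat_get' L t ht, moveList_append, moveList_singleton]

lemma moveList_reverse_take {k : ℕ} (L : List (Fin k × Fin k)) (u : ℕ → Fin k) :
    ∀ t, t ≤ L.length →
      moveList (L.reverse.take t) (moveList L u) = moveList (L.take (L.length - t)) u := by
  induction L using List.reverseRecOn with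
  | nil => intro t ht; simp
  | append_singleton M q ih =>
    intro t ht
    have hrev : (M ++ [q]).reverse = q :: M.reverse := by simp
    have hlen : (M ++ [q]).length = M.length + 1 := by simp
    cases t with
    | zero =>
      simp only [List.take_zero, moveList_nil, Nat.sub_zero, hlen]
      rw [show (M ++ [q]).take (M.length + 1) = M ++ [q] from by
        rw [← hlen, List.take_length]]
    | succ t' =>
      have ht' : t' ≤ M.length := by omega
      rw [hrev, List.take_succ_cons, moveList_cons, moveList_append, moveList_singleton,
        hMoveInf_invol, ih t' ht', hlen]
      have : M.length + 1 - (t' + 1) = M.length - t' := by omega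
      rw [this, List.take_append_of_le_length (by omega)]

/-- The third peg. -/
def other (i j : Fin 3) : Fin 3 :=
  if i ≠ 0 ∧ j ≠ 0 then 0 else if i ≠ 1 ∧ j ≠ 1 then 1 else 2

lemma eq_other : ∀ i j x : Fin 3, i ≠ j → x ≠ i → x ≠ j → x = other i j := by decide

lemma other_ne : ∀ i j : Fin 3, i ≠ j → other i j ≠ i ∧ other i j ≠ j := by decide

/-- Key lower bound: changing a constant prefix of length `l` from `a` to `b ≠ a`
requires at least `2^l - 1` moves. -/
lemma lowA : ∀ (l : ℕ) (L : List (Fin 3 × Fin 3)) (u : ℕ → Fin 3) (a b : Fin 3), a ≠ b →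
    (∀ r < l, u r = a) → (∀ r < l, moveList L u r = b) → 2 ^ l - 1 ≤ L.length := by
  intro l
  induction l with
  | zero => intro L u a b _ _ _; simp
  | succ l ih =>
    intro L u a b hab hu hv
    set N := L.length with hN
    -- first change of position l
    have hPN : moveList (L.take N) u l ≠ a := by
      rw [List.take_length]
      rw [hv l (Nat.lt_succ_self l)]
      exact hab.symm
    have hexP : ∃ t, moveList (L.take t) u l ≠ a := ⟨N, hPN⟩
    set T' := Nat.find hexP with hT'
    have hT'spec : moveList (L.take T') u l ≠ a := Nat.find_spec hexP
    have hT'pos : 0 < T' := by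
      rcases Nat.eq_zero_or_pos T' with h | h
      · exfalso; apply hT'spec; rw [h]; simp [hu l (Nat.lt_succ_self l)]
      · exact h
    have hT'le : T' ≤ N := Nat.find_min' hexP hPN
    have hTN : T' - 1 < N := by omega
    have hvT : moveList (L.take (T' - 1)) u l = a := by
      have := Nat.find_min hexP (m := T' - 1) (by omega)
      push_neg at this
      exact this
    have hstepT := moveList_take_succ L u (T' - 1) hTN
    have hT1 : T' - 1 + 1 = T' := by omega
    rw [hT1] at hstepT
    set v := moveList (L.take (T' - 1)) u with hvdef
    set i := (L[T' - 1]'hTN).1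
    set j := (L[T' - 1]'hTN).2
    have hchv : hMoveInf i j v l ≠ v l := by
      rw [hvT, ← hstepT]; exact hT'spec
    have hC : Cnd i j v l := cnd_of_change hchv
    have hij : i ≠ j := ne_of_change hchv
    have hcpre : ∀ r < l, v r = other i j :=
      fun r hr => eq_other i j (v r) hij (hC.2 r hr).1 (hC.2 r hr).2
    have hca : a ≠ other i j := by
      intro h
      rcases hC.1 with h' | h'
      · exact (other_ne i j hij).1 (by rw [← h, ← hvT]; exact h')
      · exact (other_ne i j hij).2 (by rw [← h, ← hvT]; exact h')
    have hIH1 : 2 ^ l - 1 ≤ T' - 1 := by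
      have := ih (L.take (T' - 1)) u a (other i j) hca
        (fun r hr => hu r (hr.trans (Nat.lt_succ_self l)))
        (fun r hr => hcpre r hr)
      rwa [List.length_take, min_eq_left (by omega)] at this
    -- last change of position l, via the reversed path
    have hrevlen : L.reverse.length = N := by simp [hN]
    have hQN : moveList (L.reverse.take N) (moveList L u) l ≠ b := by
      rw [moveList_reverse_take L u N le_rfl]
      simp only [← hN, Nat.sub_self, List.take_zero, moveList_nil]
      rw [hu l (Nat.lt_succ_self l)]
      exact hab
    have hexQ : ∃ t, moveList (L.reverse.take t) (moveList L u) l ≠ b := ⟨N, hQN⟩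
    set S' := Nat.find hexQ with hS'
    have hS'spec : moveList (L.reverse.take S') (moveList L u) l ≠ b := Nat.find_spec hexQ
    have hS'pos : 0 < S' := by
      rcases Nat.eq_zero_or_pos S' with h | h
      · exfalso; apply hS'spec; rw [h]; simp [hv l (Nat.lt_succ_self l)]
      · exact h
    have hS'le : S' ≤ N := Nat.find_min' hexQ hQN
    have hSN : S' - 1 < L.reverse.length := by omega
    have hwS : moveList (L.reverse.take (S' - 1)) (moveList L u) l = b := by
      have := Nat.find_min hexQ (m := S' - 1) (by omega)
      push_neg at this
      exact this
    have hstepS := moveList_take_succ L.reverse (moveList L u) (S' - 1) hSN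
    have hS1 : S' - 1 + 1 = S' := by omega
    rw [hS1] at hstepS
    set w := moveList (L.reverse.take (S' - 1)) (moveList L u) with hwdef
    set i' := (L.reverse[S' - 1]'hSN).1
    set j' := (L.reverse[S' - 1]'hSN).2
    have hchw : hMoveInf i' j' w l ≠ w l := by
      rw [hwS, ← hstepS]; exact hS'spec
    have hC' : Cnd i' j' w l := cnd_of_change hchw
    have hij' : i' ≠ j' := ne_of_change hchw
    have hcpre' : ∀ r < l, w r = other i' j' :=
      fun r hr => eq_other i' j' (w r) hij' (hC'.2 r hr).1 (hC'.2 r hr).2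
    have hcb : b ≠ other i' j' := by
      intro h
      rcases hC'.1 with h' | h'
      · exact (other_ne i' j' hij').1 (by rw [← h, ← hwS]; exact h')
      · exact (other_ne i' j' hij').2 (by rw [← h, ← hwS]; exact h')
    have hIH2 : 2 ^ l - 1 ≤ S' - 1 := by
      have := ih (L.reverse.take (S' - 1)) (moveList L u) b (other i' j') hcb
        (fun r hr => hv r (hr.trans (Nat.lt_succ_self l)))
        (fun r hr => hcpre' r hr)
      rwa [List.length_take, min_eq_left (by omega)] at this
    -- the two changes are distinct moves
    have hTS : (T' - 1) + (S' - 1) ≤ N - 1 := by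
      by_contra hcon
      push_neg at hcon
      have h1 : N - (S' - 1) ≤ T' - 1 := by omega
      have h2 : moveList (L.take (N - (S' - 1))) u l = a := by
        have := Nat.find_min hexP (m := N - (S' - 1)) (by omega)
        push_neg at this
        exact this
      have h3 : moveList (L.take (N - (S' - 1))) u l = b := by
        rw [← moveList_reverse_take L u (S' - 1) (by omega)]
        exact hwS
      exact hab (h2 ▸ h3)
    have h2l : 1 ≤ 2 ^ l := Nat.one_le_two_pow
    have hpow : 2 ^ (l + 1) = 2 * 2 ^ l := by rw [pow_succ]; ring
    omega

end HanoiAux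
namespace HanoiAux

/-- Within fewer than `2^m` moves from `000…`, no position `≥ m` can become nonzero. -/
lemma supp_zero : ∀ (L : List (Fin 3 × Fin 3)) (m : ℕ), L.length < 2 ^ m →
    ∀ l, m ≤ l → moveList L (fun _ => (0 : Fin 3)) l = 0 := by
  intro L
  induction L using List.reverseRecOn with
  | nil => intro m _ l _; rfl
  | append_singleton M q ih =>
    intro m hlen l hml
    have hlen' : (M ++ [q]).length = M.length + 1 := by simp
    have hM : M.length < 2 ^ m := by omega
    set u := moveList M (fun _ => (0 : Fin 3)) with hu
    rw [moveList_append, moveList_singleton]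
    by_contra hne
    have hul : u l = 0 := ih m hM l hml
    have hch : hMoveInf q.1 q.2 u l ≠ u l := by rw [hul]; exact hne
    have hC : Cnd q.1 q.2 u l := cnd_of_change hch
    have hij : q.1 ≠ q.2 := ne_of_change hch
    have hc0 : other q.1 q.2 ≠ 0 := by
      intro h0
      rcases hC.1 with h' | h'
      · exact (other_ne q.1 q.2 hij).1 (h0.trans (by rw [← h', hul]))
      · exact (other_ne q.1 q.2 hij).2 (h0.trans (by rw [← h', hul]))
    have hpre : ∀ r < m, u r = other q.1 q.2 := by
      intro r hr
      have hrl : r < l := lt_of_lt_of_le hr hml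
      exact eq_other q.1 q.2 (u r) hij (hC.2 r hrl).1 (hC.2 r hrl).2
    have := lowA m M (fun _ => (0 : Fin 3)) 0 (other q.1 q.2) (Ne.symm hc0)
      (fun r _ => rfl) hpre
    omega

/-- Normalise a pair of distinct pegs so that the first is smaller. -/
def mk2 (i j : Fin 3) : Fin 3 × Fin 3 := if i < j then (i, j) else (j, i)

lemma mk2_lt : ∀ i j : Fin 3, i ≠ j → (mk2 i j).1 < (mk2 i j).2 := by decide

lemma hMoveInf_mk2 (i j : Fin 3) (s : ℕ → Fin 3) :
    hMoveInf (mk2 i j).1 (mk2 i j).2 s = hMoveInf i j s := by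
  unfold mk2
  split
  · rfl
  · exact hMoveInf_comm i j s

/-- Classical Hanoi upper bound: from the perfect state on peg `p` one can reach any
configuration of the first `m` positions in at most `2^m - 1` moves, without touching
positions `≥ m`. -/
lemma reach : ∀ (m : ℕ) (p : Fin 3) (a u : ℕ → Fin 3), (∀ r < m, u r = p) →
    ∃ L : List (Fin 3 × Fin 3), (∀ q ∈ L, q.1 < q.2) ∧ L.length + 1 ≤ 2 ^ m ∧
      (∀ r < m, moveList L u r = a r) ∧ (∀ r, m ≤ r → moveList L u r = u r) := by
  intro m
  induction m with
  | zero =>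
    intro p a u _
    exact ⟨[], by simp, by simp, fun r hr => absurd hr (Nat.not_lt_zero r), fun r _ => rfl⟩
  | succ m ih =>
    intro p a u hu
    have hum : u m = p := hu m (Nat.lt_succ_self m)
    by_cases hc : a m = p
    · obtain ⟨L, hlt, hlen, h1, h2⟩ := ih p a u (fun r hr => hu r (hr.trans (Nat.lt_succ_self m)))
      refine ⟨L, hlt, le_trans hlen (Nat.pow_le_pow_right (by norm_num) (Nat.le_succ m)), ?_, ?_⟩
      · intro r hr
        rcases Nat.lt_succ_iff_lt_or_eq.mp hr with hr' | hr'
        · exact h1 r hr'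
        · subst hr'; rw [h2 r le_rfl, hum, hc]
      · intro r hr
        exact h2 r (le_trans (Nat.le_succ m) hr)
    · -- move the top m disks to the third peg, move disk m, then rearrange
      have hpc : p ≠ a m := fun h => hc h.symm
      set c := a m with hcdef
      set d := other p c with hddef
      have hdp : d ≠ p := (other_ne p c hpc).1
      have hdc : d ≠ c := (other_ne p c hpc).2
      obtain ⟨L₁, hlt₁, hlen₁, h11, h12⟩ :=
        ih p (fun _ => d) u (fun r hr => hu r (hr.trans (Nat.lt_succ_self m)))
      set v := moveList L₁ u with hv
      have hvm : v m = p := by rw [h12 m le_rfl, hum]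
      have hCnd : Cnd p c v m := by
        refine ⟨Or.inl hvm, fun l hl => ?_⟩
        rw [h11 l hl]
        exact ⟨hdp, hdc⟩
      have hupd := hMoveInf_eq_update p c v m hCnd.1 hCnd.2
      set w := hMoveInf p c v with hw
      have hwm : w m = c := by
        rw [hupd, Function.update_self, hvm, Equiv.swap_apply_left]
      have hwne : ∀ r, r ≠ m → w r = v r := by
        intro r hr
        rw [hupd, Function.update_of_ne hr]
      obtain ⟨L₂, hlt₂, hlen₂, h21, h22⟩ :=
        ih d a w (fun r hr => by rw [hwne r hr.ne, h11 r hr])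
      refine ⟨L₁ ++ mk2 p c :: L₂, ?_, ?_, ?_, ?_⟩
      · intro q hq
        rcases List.mem_append.mp hq with h | h
        · exact hlt₁ q h
        · rcases List.mem_cons.mp h with h | h
          · rw [h]; exact mk2_lt p c hpc
          · exact hlt₂ q h
      · have : (L₁ ++ mk2 p c :: L₂).length = L₁.length + L₂.length + 1 := by
          simp [List.length_append]
          omega
        have hpow : 2 ^ (m + 1) = 2 * 2 ^ m := by rw [pow_succ]; ring
        omega
      · intro r hr
        rw [moveList_append, moveList_cons, ← hv, hMoveInf_mk2, ← hw]
        rcases Nat.lt_succ_iff_lt_or_eq.mp hr with hr' | hr'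
        · exact h21 r hr'
        · subst hr'; rw [h22 r le_rfl, hwm]
      · intro r hr
        rw [moveList_append, moveList_cons, ← hv, hMoveInf_mk2, ← hw]
        have hrm : m ≤ r := le_trans (Nat.le_succ m) hr
        have hrne : r ≠ m := by omega
        rw [h22 r hrm, hwne r hrne, h12 r hrm]

end HanoiAux
namespace HanoiAux

open SimpleGraph

lemma walk_of_list : ∀ (L : List (Fin 3 × Fin 3)) (u : ℕ → Fin 3), (∀ q ∈ L, q.1 < q.2) →
    ∃ w : (infGraph 3).Walk u (moveList L u), w.length ≤ L.length := by
  intro L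
  induction L with
  | nil => intro u _; exact ⟨Walk.nil, by simp⟩
  | cons q L ih =>
    intro u hlt
    set t := hMoveInf q.1 q.2 u with ht
    have hrw : moveList (q :: L) u = moveList L t := rfl
    by_cases htu : t = u
    · obtain ⟨w, hw⟩ := ih u (fun p hp => hlt p (List.mem_cons_of_mem q hp))
      have e : moveList L u = moveList (q :: L) u := by rw [hrw, htu]
      refine ⟨w.copy rfl e, ?_⟩
      rw [Walk.length_copy]
      exact le_trans hw (by simp [List.length_cons])
    · have hadj : (infGraph 3).Adj u t :=
        (show u ≠ t ∧ ∃ i j : Fin 3, i < j ∧ (hMoveInf i j u = t ∨ hMoveInf i j t = u) from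
          ⟨fun h => htu h.symm, q.1, q.2, hlt q (by simp), Or.inl rfl⟩)
      obtain ⟨w, hw⟩ := ih t (fun p hp => hlt p (List.mem_cons_of_mem q hp))
      refine ⟨(Walk.cons hadj w).copy rfl hrw.symm, ?_⟩
      rw [Walk.length_copy, Walk.length_cons, List.length_cons]
      omega

lemma list_of_walk : ∀ {u v : ℕ → Fin 3} (w : (infGraph 3).Walk u v),
    ∃ L : List (Fin 3 × Fin 3), (∀ q ∈ L, q.1 < q.2) ∧ L.length = w.length ∧
      moveList L u = v := by
  intro u v w
  induction w with
  | nil => exact ⟨[], by simp, rfl, rfl⟩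
  | @cons u x v h w ih =>
    obtain ⟨hne, i, j, hij, hcase⟩ :=
      (h : u ≠ x ∧ ∃ i j : Fin 3, i < j ∧ (hMoveInf i j u = x ∨ hMoveInf i j x = u))
    have hx : hMoveInf i j u = x := by
      rcases hcase with h' | h'
      · exact h'
      · rw [← h', hMoveInf_invol]
    obtain ⟨L, hlt, hlen, hfold⟩ := ih
    refine ⟨(i, j) :: L, ?_, ?_, ?_⟩
    · intro q hq
      rcases List.mem_cons.mp hq with h' | h'
      · rw [h']; exact hij
      · exact hlt q h'
    · simp [hlen]
      rfl
    · rw [moveList_cons]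
      simpa [hx] using hfold

/-- The set of words supported on the first `m` letters. -/
def Supp (m : ℕ) : Set (ℕ → Fin 3) := {s | ∀ r, m ≤ r → s r = 0}

def suppEmb (m : ℕ) (f : Fin m → Fin 3) : ℕ → Fin 3 :=
  fun r => if h : r < m then f ⟨r, h⟩ else 0

lemma supp_eq_range (m : ℕ) : Supp m = Set.range (suppEmb m) := by
  ext s
  constructor
  · intro hs
    refine ⟨fun i => s i, funext fun r => ?_⟩
    unfold suppEmb
    split
    · rfl
    · next h => exact (hs r (by omega)).symm
  · rintro ⟨f, rfl⟩ r hr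
    unfold suppEmb
    rw [dif_neg (by omega)]

lemma suppEmb_injective (m : ℕ) : Function.Injective (suppEmb m) := by
  intro f g h
  funext i
  have := congr_fun h i.val
  unfold suppEmb at this
  rw [dif_pos i.isLt, dif_pos i.isLt] at this
  simpa using this

lemma supp_finite (m : ℕ) : (Supp m).Finite := by
  rw [supp_eq_range]
  exact Set.finite_range _

lemma supp_ncard (m : ℕ) : (Supp m).ncard = 3 ^ m := by
  rw [supp_eq_range, ← Set.image_univ, Set.ncard_image_of_injective _ (suppEmb_injective m),
    Set.ncard_univ, Nat.card_eq_fintype_card, Fintype.card_fun]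
  simp

end HanoiAux
namespace HanoiAux

open SimpleGraph

lemma ball_subset_supp (n m : ℕ) (h : n < 2 ^ m) :
    {s | inOrbit (fun _ => (0 : Fin 3)) s ∧
      (infGraph 3).dist (fun _ => (0 : Fin 3)) s ≤ n} ⊆ Supp m := by
  rintro s ⟨⟨L, hlt, hfold⟩, hdist⟩
  have hfold' : moveList L (fun _ => (0 : Fin 3)) = s := hfold
  obtain ⟨w, _⟩ := walk_of_list L _ hlt
  have hreach : (infGraph 3).Reachable (fun _ => (0 : Fin 3)) s := ⟨w.copy rfl hfold'⟩
  obtain ⟨w', hw'⟩ := hreach.exists_walk_length_eq_dist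
  obtain ⟨L', hlt', hlen', hfold''⟩ := list_of_walk w'
  intro r hr
  rw [← hfold'']
  exact supp_zero L' m (by rw [hlen', hw']; omega) r hr

lemma supp_subset_ball (n m : ℕ) (h : 2 ^ m ≤ n + 1) :
    Supp m ⊆ {s | inOrbit (fun _ => (0 : Fin 3)) s ∧
      (infGraph 3).dist (fun _ => (0 : Fin 3)) s ≤ n} := by
  intro s hs
  obtain ⟨L, hlt, hlen, h1, h2⟩ := reach m 0 s (fun _ => 0) (fun r _ => rfl)
  have hfold : moveList L (fun _ => (0 : Fin 3)) = s := by
    funext r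
    by_cases hr : r < m
    · exact h1 r hr
    · rw [h2 r (by omega)]
      exact (hs r (by omega)).symm
  refine ⟨⟨L, hlt, hfold⟩, ?_⟩
  obtain ⟨w, hw⟩ := walk_of_list L _ hlt
  have := SimpleGraph.dist_le (w.copy rfl hfold)
  rw [Walk.length_copy] at this
  omega

lemma log2_ne : Real.log 2 ≠ 0 := ne_of_gt (Real.log_pos one_lt_two)

lemma two_rpow_d : (2 : ℝ) ^ (Real.log 3 / Real.log 2) = 3 := by
  rw [Real.rpow_def_of_pos (by norm_num : (0:ℝ) < 2), mul_comm,
    div_mul_cancel₀ _ log2_ne, Real.exp_log (by norm_num : (0:ℝ) < 3)]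

lemma three_pow_eq (m : ℕ) :
    ((3 : ℝ)) ^ m = ((2 : ℝ) ^ m) ^ (Real.log 3 / Real.log 2) := by
  rw [← Real.rpow_natCast 2 m, ← Real.rpow_natCast 3 m,
    ← Real.rpow_mul (by norm_num : (0:ℝ) ≤ 2)]
  rw [Real.rpow_def_of_pos (by norm_num : (0:ℝ) < 3),
    Real.rpow_def_of_pos (by norm_num : (0:ℝ) < 2)]
  congr 1
  field_simp

end HanoiAux

/-- For `k = 3`, the orbital Schreier graph `Γ_{000…}` of `H(3)` has
polynomial growth of degree `log 3 / log 2`: there are constants `c₂ ≥ c₁ > 0` with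
`c₁ · n^(log 3 / log 2) ≤ γ(n) ≤ c₂ · n^(log 3 / log 2)` for all `n ≥ 1`. -/
theorem hanoi3_orbital_growth_polynomial :
    ∃ c₁ c₂ : ℝ, 0 < c₁ ∧ c₁ ≤ c₂ ∧
      ∀ n : ℕ, 1 ≤ n →
        c₁ * (n : ℝ) ^ (Real.log 3 / Real.log 2) ≤
            (orbitalGrowth (fun _ => (0 : Fin 3)) n : ℝ) ∧
        (orbitalGrowth (fun _ => (0 : Fin 3)) n : ℝ) ≤
            c₂ * (n : ℝ) ^ (Real.log 3 / Real.log 2) := by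
  classical
  refine ⟨1/3, 3, by norm_num, by norm_num, ?_⟩
  intro n hn
  have hn0 : (0:ℝ) < (n : ℝ) := by exact_mod_cast hn
  set d : ℝ := Real.log 3 / Real.log 2 with hd
  have hd0 : 0 ≤ d := div_nonneg (Real.log_nonneg (by norm_num)) (Real.log_nonneg (by norm_num))
  -- upper bound setup
  set m₂ := Nat.log 2 n + 1 with hm₂
  have hnlt : n < 2 ^ m₂ := Nat.lt_pow_succ_log_self (by norm_num) n
  have hsub₂ := HanoiAux.ball_subset_supp n m₂ hnlt
  have hγ : orbitalGrowth (fun _ => (0 : Fin 3)) n =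
      {s | inOrbit (fun _ => (0 : Fin 3)) s ∧
        (infGraph 3).dist (fun _ => (0 : Fin 3)) s ≤ n}.ncard := rfl
  have hcard₂ : orbitalGrowth (fun _ => (0 : Fin 3)) n ≤ 3 ^ m₂ := by
    rw [hγ, ← HanoiAux.supp_ncard m₂]
    exact Set.ncard_le_ncard hsub₂ (HanoiAux.supp_finite m₂)
  have h2m₂ : 2 ^ m₂ ≤ 2 * n := by
    have := Nat.pow_log_le_self 2 (show n ≠ 0 by omega)
    have hps : 2 ^ m₂ = 2 * 2 ^ Nat.log 2 n := by rw [hm₂, pow_succ]; ring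
    omega
  -- lower bound setup
  set m₁ := Nat.log 2 (n + 1) with hm₁
  have h2m₁ : 2 ^ m₁ ≤ n + 1 := Nat.pow_log_le_self 2 (Nat.succ_ne_zero n)
  have hsub₁ := HanoiAux.supp_subset_ball n m₁ h2m₁
  have hballfin : {s | inOrbit (fun _ => (0 : Fin 3)) s ∧
      (infGraph 3).dist (fun _ => (0 : Fin 3)) s ≤ n}.Finite :=
    (HanoiAux.supp_finite m₂).subset hsub₂
  have hcard₁ : 3 ^ m₁ ≤ orbitalGrowth (fun _ => (0 : Fin 3)) n := by
    rw [hγ, ← HanoiAux.supp_ncard m₁]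
    exact Set.ncard_le_ncard hsub₁ hballfin
  have hnlt₁ : n + 1 < 2 ^ (m₁ + 1) := Nat.lt_pow_succ_log_self (by norm_num) (n + 1)
  have hn2m₁ : n ≤ 2 * 2 ^ m₁ := by
    have hps : 2 ^ (m₁ + 1) = 2 * 2 ^ m₁ := by rw [pow_succ]; ring
    omega
  constructor
  · -- lower bound
    have c0 : ((3:ℝ)) ^ m₁ ≤ (orbitalGrowth (fun _ => (0 : Fin 3)) n : ℝ) := by
      exact_mod_cast hcard₁
    have c1 : (n : ℝ) ≤ 2 * 2 ^ m₁ := by exact_mod_cast hn2m₁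
    have c2 : (n : ℝ) ^ d ≤ (2 * (2:ℝ) ^ m₁) ^ d :=
      Real.rpow_le_rpow (le_of_lt hn0) c1 hd0
    have c3 : (2 * (2:ℝ) ^ m₁) ^ d = (2:ℝ) ^ d * ((2:ℝ) ^ m₁) ^ d :=
      Real.mul_rpow (by norm_num) (by positivity)
    have c4 : (2 * (2:ℝ) ^ m₁) ^ d = 3 * (3:ℝ) ^ m₁ := by
      rw [c3, hd, HanoiAux.two_rpow_d, ← HanoiAux.three_pow_eq m₁]
    calc 1/3 * (n : ℝ) ^ d ≤ 1/3 * (3 * (3:ℝ) ^ m₁) := by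
          rw [← c4]; linarith
      _ = (3:ℝ) ^ m₁ := by ring
      _ ≤ _ := c0
  · -- upper bound
    have c0 : (orbitalGrowth (fun _ => (0 : Fin 3)) n : ℝ) ≤ ((3:ℝ)) ^ m₂ := by
      exact_mod_cast hcard₂
    have c1 : ((2:ℝ)) ^ m₂ ≤ 2 * n := by exact_mod_cast h2m₂
    have c2 : ((2:ℝ) ^ m₂) ^ d ≤ (2 * (n:ℝ)) ^ d :=
      Real.rpow_le_rpow (by positivity) c1 hd0
    have c3 : (2 * (n:ℝ)) ^ d = (2:ℝ) ^ d * (n:ℝ) ^ d :=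
      Real.mul_rpow (by norm_num) (le_of_lt hn0)
    calc (orbitalGrowth (fun _ => (0 : Fin 3)) n : ℝ) ≤ ((3:ℝ)) ^ m₂ := c0
      _ = ((2:ℝ) ^ m₂) ^ d := by rw [hd, HanoiAux.three_pow_eq m₂]
      _ ≤ (2 * (n:ℝ)) ^ d := c2
      _ = 3 * (n:ℝ) ^ d := by rw [c3, hd, HanoiAux.two_rpow_d]
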